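/- arXiv:1307.0321 — 3 statements merged into one kernel-verified Lean document; each statement's English description precedes it below -/
import Mathlib

section
/- Let n ≥ 1, k ∈ ℕ, and let φ be a real-valued function on a punctured neighborhood of 0 in ℝⁿ. Suppose there exist homogeneous polynomials P_p of degree p and Q_{p−1} of degree p−1 on ℝⁿ (for 0 ≤ p ≤ k, with Q_{−1} := 0) such that φ(ȳ) − Σ_{p=0}^{k} (P_p(ȳ) + |ȳ|·Q_{p−1}(ȳ)) is o_k(r^k). Then there exists a function f of class C^k on a neighborhood of 0 in ℝ^{1+n} whose trace on the light cone C_O equals φ, i.e. f(|ȳ|, ȳ) = φ(ȳ) for all ȳ ≠ 0 near 0. -/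
open Filter Topology MeasureTheory

/-- `φ` is `o_m(r^k)` near the origin of `ℝⁿ` (punctured): `φ` is `C^m` on a punctured
ball around `0`, and for every `ℓ ≤ m` one has `‖y‖^(ℓ-k) ‖D^ℓ φ(y)‖ → 0` as `y → 0`,
`y ≠ 0`. -/
def IsLittleOCone (n m : ℕ) (k : ℤ) (φ : EuclideanSpace ℝ (Fin n) → ℝ) : Prop :=
  ∃ ε > (0 : ℝ), ContDiffOn ℝ (m : ℕ∞) φ
      (Metric.ball (0 : EuclideanSpace ℝ (Fin n)) ε \ {0}) ∧
    ∀ ℓ : ℕ, ℓ ≤ m →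
      Tendsto (fun y : EuclideanSpace ℝ (Fin n) =>
          ‖y‖ ^ ((ℓ : ℝ) - (k : ℝ)) * ‖iteratedFDeriv ℝ ℓ φ y‖)
        (𝓝[≠] (0 : EuclideanSpace ℝ (Fin n))) (𝓝 0)

open Filter Topology Metric Set in
open scoped Classical in
lemma extend_contDiffOn_aux {E : Type*} [NormedAddCommGroup E] [NormedSpace ℝ E]
    (k : ℕ) (ε : ℝ) (hε : 0 < ε) (hε1 : ε ≤ 1) (g : E → ℝ)
    (hg : ContDiffOn ℝ (k : ℕ∞) g (ball (0 : E) ε \ {0}))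
    (hlim : ∀ ℓ : ℕ, ℓ ≤ k →
      Tendsto (fun y : E => ‖y‖ ^ ((ℓ : ℝ) - (k : ℝ)) * ‖iteratedFDeriv ℝ ℓ g y‖)
        (𝓝[≠] (0 : E)) (𝓝 0)) :
    ContDiffOn ℝ (k : ℕ∞) (fun y => if y = 0 then 0 else g y) (ball (0 : E) ε) := by
  set u : Set E := ball (0 : E) ε \ {0} with hu_def
  have hu : IsOpen u := isOpen_ball.sdiff isClosed_singleton
  set p : E → FormalMultilinearSeries ℝ E ℝ :=
    fun y ℓ => if y = 0 then 0 else iteratedFDeriv ℝ ℓ g y with hp_def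
  have hball : ∀ᶠ y in 𝓝[≠] (0 : E), y ∈ u := by
    have hb : ball (0 : E) ε ∈ 𝓝 (0 : E) := ball_mem_nhds _ hε
    filter_upwards [eventually_mem_nhdsWithin, nhdsWithin_le_nhds hb] with y h1 h2
    exact ⟨h2, h1⟩
  have key : ∀ (ℓ : ℕ) (y : E), y ∈ u →
      ‖iteratedFDeriv ℝ ℓ g y‖
        = ‖y‖ ^ ((k : ℝ) - ℓ) * (‖y‖ ^ ((ℓ : ℝ) - k) * ‖iteratedFDeriv ℝ ℓ g y‖) := by
    intro ℓ y hy
    have hy0 : (0 : ℝ) < ‖y‖ := norm_pos_iff.2 hy.2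
    rw [← mul_assoc, ← Real.rpow_add hy0]
    have h0 : ((k : ℝ) - ℓ) + ((ℓ : ℝ) - k) = 0 := by ring
    rw [h0, Real.rpow_zero, one_mul]
  have hyle1 : ∀ y : E, y ∈ u → ‖y‖ ≤ 1 := fun y hy =>
    le_of_lt (lt_of_lt_of_le (mem_ball_zero_iff.1 hy.1) hε1)
  -- continuity at 0
  have cont0 : ∀ ℓ : ℕ, ℓ ≤ k →
      Tendsto (fun y => ‖iteratedFDeriv ℝ ℓ g y‖) (𝓝[≠] (0 : E)) (𝓝 0) := by
    intro ℓ hℓ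
    apply squeeze_zero' (Eventually.of_forall fun y => norm_nonneg _) _ (hlim ℓ hℓ)
    filter_upwards [hball] with y hy
    have hy0 : (0 : ℝ) < ‖y‖ := norm_pos_iff.2 hy.2
    have h1 : (1 : ℝ) ≤ ‖y‖ ^ ((ℓ : ℝ) - k) := by
      apply Real.one_le_rpow_of_pos_of_le_one_of_nonpos hy0 (hyle1 y hy)
      have hc : (ℓ : ℝ) ≤ k := by exact_mod_cast hℓ
      linarith
    exact le_mul_of_one_le_left (norm_nonneg _) h1
  -- little-o at 0 for ℓ < k
  have littleo : ∀ ℓ : ℕ, ℓ < k →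
      (fun y : E => iteratedFDeriv ℝ ℓ g y) =o[𝓝[u] (0 : E)] (fun y : E => y) := by
    intro ℓ hℓ
    rw [Asymptotics.isLittleO_iff]
    intro c hc
    have hmono : 𝓝[u] (0 : E) ≤ 𝓝[≠] (0 : E) := nhdsWithin_mono _ (fun y hy => hy.2)
    have hev : ∀ᶠ y in 𝓝[≠] (0 : E),
        ‖y‖ ^ ((ℓ : ℝ) - k) * ‖iteratedFDeriv ℝ ℓ g y‖ < c :=
      (hlim ℓ hℓ.le).eventually_lt_const hc
    filter_upwards [eventually_mem_nhdsWithin, hev.filter_mono hmono] with y hy hyc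
    have hy0 : (0 : ℝ) < ‖y‖ := norm_pos_iff.2 hy.2
    have h2 : ‖y‖ ^ ((k : ℝ) - ℓ) ≤ ‖y‖ := by
      have h3 : (1 : ℝ) ≤ (k : ℝ) - ℓ := by
        have hc' : (ℓ : ℝ) + 1 ≤ k := by exact_mod_cast hℓ
        linarith
      calc ‖y‖ ^ ((k : ℝ) - ℓ) ≤ ‖y‖ ^ (1 : ℝ) :=
            Real.rpow_le_rpow_of_exponent_ge hy0 (hyle1 y hy) h3
        _ = ‖y‖ := Real.rpow_one _
    calc ‖iteratedFDeriv ℝ ℓ g y‖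
        = ‖y‖ ^ ((k : ℝ) - ℓ) * (‖y‖ ^ ((ℓ : ℝ) - k) * ‖iteratedFDeriv ℝ ℓ g y‖) :=
          key ℓ y hy
      _ ≤ ‖y‖ ^ ((k : ℝ) - ℓ) * c :=
          mul_le_mul_of_nonneg_left hyc.le (Real.rpow_nonneg hy0.le _)
      _ ≤ ‖y‖ * c := mul_le_mul_of_nonneg_right h2 hc.le
      _ = c * ‖y‖ := mul_comm _ _
  -- Taylor series of g on the open punctured ball
  have H : HasFTaylorSeriesUpToOn (k : ℕ∞) g (ftaylorSeriesWithin ℝ g u) u :=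
    hg.ftaylorSeriesWithin hu.uniqueDiffOn
  have hpeq : ∀ y ∈ u, ∀ ℓ : ℕ, ftaylorSeriesWithin ℝ g u y ℓ = p y ℓ := by
    intro y hy ℓ
    have h1 := iteratedFDerivWithin_of_isOpen (𝕜 := ℝ) (f := g) ℓ hu hy
    have hy0 : y ≠ 0 := hy.2
    show iteratedFDerivWithin ℝ ℓ g u y = _
    simp only [hp_def]
    rw [if_neg hy0]
    exact h1
  have hT : HasFTaylorSeriesUpToOn (k : ℕ∞) (fun y => if y = 0 then 0 else g y) p
      (ball (0 : E) ε) := by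
    constructor
    · intro x hx
      by_cases hx0 : x = 0
      · simp [hp_def, hx0]
      · simp only [hp_def, if_neg hx0]
        exact (H.zero_eq x ⟨hx, hx0⟩)
    · intro m hm x hx
      by_cases hx0 : x = 0
      · subst hx0
        have hcurry : (p 0 m.succ).curryLeft = 0 := by
          have hz : p 0 m.succ = 0 := by simp [hp_def]
          rw [hz]
          ext v w
          simp
        rw [hcurry]
        rw [← hasFDerivWithinAt_diff_singleton (0 : E)]
        have hset : ball (0 : E) ε \ {(0 : E)} = u := rfl
        rw [hset]
        have hlo : (fun y : E => p y m - p 0 m - (0 : E →L[ℝ] (E [×m]→L[ℝ] ℝ)) (y - 0))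
            =o[𝓝[u] (0 : E)] (fun y : E => y - 0) := by
          have hm' : m < k := by exact_mod_cast hm
          refine ((littleo m hm').congr' ?_ ?_)
          · filter_upwards [eventually_mem_nhdsWithin] with y hy
            have hy0 : y ≠ 0 := hy.2
            simp [hp_def, if_neg hy0]
          · filter_upwards with y; simp
        exact HasFDerivWithinAt.of_isLittleO hlo
      · have hxu : x ∈ u := ⟨hx, hx0⟩
        have hm' : (m : ℕ∞) < (k : ℕ∞) := by exact_mod_cast hm
        have Hd := H.fderivWithin m (by exact_mod_cast hm') x hxu
        have Hd2 : HasFDerivWithinAt (fun y => p y m) ((p x m.succ).curryLeft) u x := by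
          rw [← hpeq x hxu m.succ]
          apply Hd.congr_of_eventuallyEq ?_ (by rw [hpeq x hxu m])
          filter_upwards [eventually_mem_nhdsWithin] with y hy
          exact (hpeq y hy m).symm
        exact Hd2.mono_of_mem_nhdsWithin (mem_nhdsWithin_of_mem_nhds (hu.mem_nhds hxu))
    · intro m hm x hx
      have hm' : m ≤ k := by exact_mod_cast hm
      by_cases hx0 : x = 0
      · subst hx0
        have hmono : 𝓝[u] (0 : E) ≤ 𝓝[≠] (0 : E) := nhdsWithin_mono _ (fun y hy => hy.2)
        have ht : Tendsto (fun y => iteratedFDeriv ℝ m g y) (𝓝[u] (0 : E)) (𝓝 0) :=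
          (tendsto_zero_iff_norm_tendsto_zero.2 (cont0 m hm')).mono_left hmono
        have ht2 : Tendsto (fun y => p y m) (𝓝[u] (0 : E)) (𝓝 0) := by
          apply ht.congr'
          filter_upwards [eventually_mem_nhdsWithin] with y hy
          have hy0 : y ≠ 0 := hy.2
          simp [hp_def, if_neg hy0]
        rw [← continuousWithinAt_diff_self]
        show Tendsto (fun y => p y m) (𝓝[ball (0 : E) ε \ {(0 : E)}] 0) (𝓝 (p 0 m))
        have hp0 : p 0 m = 0 := by simp [hp_def]
        rw [hp0]
        exact ht2
      · have hxu : x ∈ u := ⟨hx, hx0⟩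
        have Hc : ContinuousAt (fun y => ftaylorSeriesWithin ℝ g u y m) x :=
          (H.cont m (by exact_mod_cast hm')).continuousAt (hu.mem_nhds hxu)
        have Hc2 : ContinuousAt (fun y => p y m) x := by
          apply Hc.congr
          filter_upwards [hu.mem_nhds hxu] with y hy
          exact (hpeq y hy m)
        exact Hc2.continuousWithinAt
  exact hT.contDiffOn

open Filter Topology Metric Set in
lemma contDiff_eval_poly {n : ℕ} (q : MvPolynomial (Fin n) ℝ) :
    ContDiff ℝ ((⊤ : ℕ∞)) (fun z : ℝ × EuclideanSpace ℝ (Fin n) =>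
      MvPolynomial.eval (fun i => z.2 i) q) := by
  induction q using MvPolynomial.induction_on with
  | C a => simpa using contDiff_const
  | add p q hp hq => simpa [MvPolynomial.eval_add] using hp.add hq
  | mul_X p i hp =>
      simp only [MvPolynomial.eval_mul, MvPolynomial.eval_X]
      have h2 : ContDiff ℝ ((⊤ : ℕ∞)) (fun z : ℝ × EuclideanSpace ℝ (Fin n) => z.2 i) := by
        have := (EuclideanSpace.proj (𝕜 := ℝ) i).contDiff.comp
          (contDiff_snd (E := ℝ) (F := EuclideanSpace ℝ (Fin n)) (𝕜 := ℝ) (n := ((⊤:ℕ∞) : WithTop ℕ∞)))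
        exact this
      exact hp.mul h2

/-- if `φ`, defined on a punctured neighborhood of `0` in `ℝⁿ`, admits an
admissible expansion of order `k` with remainder `o_k(r^k)`, then `φ` is the trace
`ȳ ↦ f(|ȳ|, ȳ)` on the light cone of a `C^k` function `f` defined near `0` in `ℝ^{1+n}`. -/
theorem admissible_expansion_is_trace
    (n k : ℕ) (hn : 1 ≤ n)
    (φ : EuclideanSpace ℝ (Fin n) → ℝ)
    (P Q : ℕ → MvPolynomial (Fin n) ℝ)
    (hP : ∀ p, p ≤ k → (P p).IsHomogeneous p)
    (hQ0 : Q 0 = 0)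
    (hQ : ∀ p, 1 ≤ p → p ≤ k → (Q p).IsHomogeneous (p - 1))
    (h : IsLittleOCone n k (k : ℤ) (fun y =>
        φ y - ∑ p ∈ Finset.range (k + 1),
          (MvPolynomial.eval (fun i => y i) (P p)
            + ‖y‖ * MvPolynomial.eval (fun i => y i) (Q p)))) :
    ∃ (f : ℝ × EuclideanSpace ℝ (Fin n) → ℝ) (ε : ℝ), 0 < ε ∧
      ContDiffOn ℝ (k : ℕ∞) f (Metric.ball (0 : ℝ × EuclideanSpace ℝ (Fin n)) ε) ∧
      ∀ y : EuclideanSpace ℝ (Fin n), y ≠ 0 → ‖y‖ < ε → f (‖y‖, y) = φ y := by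
  classical
  obtain ⟨ε, hε, hC, hT⟩ := h
  set ρ : EuclideanSpace ℝ (Fin n) → ℝ := fun y =>
    φ y - ∑ p ∈ Finset.range (k + 1),
      (MvPolynomial.eval (fun i => y i) (P p)
        + ‖y‖ * MvPolynomial.eval (fun i => y i) (Q p)) with hρ_def
  set ε' : ℝ := min ε 1 with hε'_def
  have hε'0 : 0 < ε' := lt_min hε one_pos
  have hsub : Metric.ball (0 : EuclideanSpace ℝ (Fin n)) ε' \ {0}
      ⊆ Metric.ball (0 : EuclideanSpace ℝ (Fin n)) ε \ {0} :=
    Set.diff_subset_diff_left (Metric.ball_subset_ball (min_le_left _ _))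
  have hG : ContDiffOn ℝ (k : ℕ∞) (fun y => if y = 0 then 0 else ρ y)
      (Metric.ball (0 : EuclideanSpace ℝ (Fin n)) ε') :=
    by convert (extend_contDiffOn_aux k ε' hε'0 (min_le_right _ _) ρ (hC.mono hsub)
      (fun ℓ hℓ => hT ℓ hℓ))
  refine ⟨fun z => (∑ p ∈ Finset.range (k + 1),
      (MvPolynomial.eval (fun i => z.2 i) (P p)
        + z.1 * MvPolynomial.eval (fun i => z.2 i) (Q p)))
      + (if z.2 = 0 then 0 else ρ z.2), ε', hε'0, ?_, ?_⟩
  · apply ContDiffOn.add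
    · apply ContDiff.contDiffOn
      apply ContDiff.of_le (n := (((⊤ : ℕ∞)) : WithTop ℕ∞)) _ (by exact_mod_cast le_top)
      apply ContDiff.sum
      intro p _
      exact (contDiff_eval_poly (P p)).add (contDiff_fst.mul (contDiff_eval_poly (Q p)))
    · apply hG.comp contDiff_snd.contDiffOn
      intro z hz
      simp only [Metric.mem_ball, dist_zero_right] at hz ⊢
      exact lt_of_le_of_lt (norm_snd_le z) hz
  · intro y hy hylt
    simp only [if_neg hy, hρ_def]
    ring
end

section
/- Let n ≥ 1, k ≥ 1 an integer, and let ψ be a real-valued function on a punctured neighborhood of 0 in ℝⁿ admitting an admissible expansion starting at order 1: there exist homogeneous polynomials P_p of degree p and Q_{p−1} of degree p−1 on ℝⁿ (for 1 ≤ p ≤ k) such that ψ(ȳ) − Σ_{p=1}^{k} (P_p(ȳ) + |ȳ|·Q_{p−1}(ȳ)) is o_k(r^k). Then ψ² admits an admissible expansion starting at order 2 and with remainder one order better: there exist homogeneous polynomials P′_p of degree p and Q′_{p−1} of degree p−1 (for 2 ≤ p ≤ k+1) such that ψ(ȳ)² − Σ_{p=2}^{k+1} (P′_p(ȳ) + |ȳ|·Q′_{p−1}(ȳ))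 is o_k(r^{k+1}). -/
open Filter Topology MeasureTheory

section
open Metric Set
namespace Sq
variable {n : ℕ}

def BigOCone (n m : ℕ) (a : ℤ) (f : EuclideanSpace ℝ (Fin n) → ℝ) : Prop :=
  ∃ ε : ℝ, 0 < ε ∧ ε ≤ 1 ∧ ∃ C : ℝ, 0 ≤ C ∧
    ContDiffOn ℝ (m : ℕ∞) f (Metric.ball 0 ε \ {0}) ∧
    ∀ ℓ : ℕ, ℓ ≤ m → ∀ y ∈ Metric.ball (0 : EuclideanSpace ℝ (Fin n)) ε \ {0},
      ‖iteratedFDeriv ℝ ℓ f y‖ ≤ C * ‖y‖ ^ ((a : ℝ) - (ℓ : ℝ))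

lemma S_mem (ε : ℝ) (hε : 0 < ε) :
    Metric.ball (0:EuclideanSpace ℝ (Fin n)) ε \ {0} ∈ 𝓝[≠] (0:EuclideanSpace ℝ (Fin n)) := by
  rw [mem_nhdsWithin]
  exact ⟨Metric.ball 0 ε, isOpen_ball, mem_ball_self hε, by rw [diff_eq]⟩

lemma mem_S {y : EuclideanSpace ℝ (Fin n)} {ε : ℝ} :
    y ∈ Metric.ball (0:EuclideanSpace ℝ (Fin n)) ε \ {0} ↔ ‖y‖ < ε ∧ y ≠ 0 := by
  simp [mem_ball_zero_iff]

/-- squeeze: if `0 ≤ u y ≤ C * ‖y‖ ^ t` on a punctured ball with `t > 0`, then `u → 0`. -/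
lemma tendsto_of_rpow_bound {u : EuclideanSpace ℝ (Fin n) → ℝ} {C t ε : ℝ}
    (hε : 0 < ε) (ht : 0 < t)
    (h0 : ∀ y ∈ Metric.ball (0:EuclideanSpace ℝ (Fin n)) ε \ {0}, 0 ≤ u y)
    (h1 : ∀ y ∈ Metric.ball (0:EuclideanSpace ℝ (Fin n)) ε \ {0}, u y ≤ C * ‖y‖ ^ t) :
    Tendsto u (𝓝[≠] (0:EuclideanSpace ℝ (Fin n))) (𝓝 0) := by
  have hb : Tendsto (fun y : EuclideanSpace ℝ (Fin n) => C * ‖y‖ ^ t)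
      (𝓝[≠] (0:EuclideanSpace ℝ (Fin n))) (𝓝 0) := by
    have hnorm : Tendsto (fun y : EuclideanSpace ℝ (Fin n) => ‖y‖)
        (𝓝[≠] (0:EuclideanSpace ℝ (Fin n))) (𝓝 0) := by
      have := (continuous_norm (E := EuclideanSpace ℝ (Fin n))).tendsto 0
      simpa using this.mono_left nhdsWithin_le_nhds
    have hr : Tendsto (fun x : ℝ => C * x ^ t) (𝓝 0) (𝓝 0) := by
      have hc : ContinuousAt (fun x : ℝ => x ^ t) 0 :=
        Real.continuousAt_rpow_const 0 t (Or.inr ht.le)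
      have := (hc.tendsto).const_mul C
      simpa [Real.zero_rpow ht.ne'] using this
    exact hr.comp hnorm
  refine squeeze_zero' ?_ ?_ hb
  · exact Filter.eventually_iff_exists_mem.2 ⟨_, S_mem ε hε, h0⟩
  · exact Filter.eventually_iff_exists_mem.2 ⟨_, S_mem ε hε, h1⟩

end Sq

namespace Sq
variable {n : ℕ}

lemma norm_pos_of_mem_S {y : EuclideanSpace ℝ (Fin n)} {ε : ℝ}
    (hy : y ∈ Metric.ball (0:EuclideanSpace ℝ (Fin n)) ε \ {0}) : 0 < ‖y‖ :=
  norm_pos_iff.2 (mem_S.1 hy).2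

lemma littleo_of_bigO {m : ℕ} {a b : ℤ} {f : EuclideanSpace ℝ (Fin n) → ℝ}
    (hab : b < a) (hf : BigOCone n m a f) : IsLittleOCone n m b f := by
  obtain ⟨ε, hε, hε1, C, hC0, hsm, hbd⟩ := hf
  refine ⟨ε, hε, hsm, fun ℓ hℓ => ?_⟩
  have ht : (0:ℝ) < (a:ℝ) - (b:ℝ) := by
    have : (b:ℝ) < (a:ℝ) := by exact_mod_cast hab
    linarith
  refine tendsto_of_rpow_bound (C := C) hε ht (fun y hy => ?_) (fun y hy => ?_)
  · positivity
  · have hy0 : 0 < ‖y‖ := norm_pos_of_mem_S hy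
    calc ‖y‖ ^ ((ℓ : ℝ) - (b : ℝ)) * ‖iteratedFDeriv ℝ ℓ f y‖
        ≤ ‖y‖ ^ ((ℓ : ℝ) - (b : ℝ)) * (C * ‖y‖ ^ ((a : ℝ) - (ℓ : ℝ))) := by
          exact mul_le_mul_of_nonneg_left (hbd ℓ hℓ y hy) (Real.rpow_nonneg hy0.le _)
      _ = C * ‖y‖ ^ ((a:ℝ) - (b:ℝ)) := by
          rw [mul_comm, mul_assoc, ← Real.rpow_add hy0]
          ring_nf

lemma bigO_of_littleo {m : ℕ} {b : ℤ} {f : EuclideanSpace ℝ (Fin n) → ℝ}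
    (hf : IsLittleOCone n m b f) : BigOCone n m b f := by
  obtain ⟨ε₀, hε₀, hsm, htd⟩ := hf
  have hev : ∀ᶠ y in 𝓝[≠] (0:EuclideanSpace ℝ (Fin n)),
      ∀ ℓ ∈ Finset.range (m+1), ‖y‖ ^ ((ℓ:ℝ) - (b:ℝ)) * ‖iteratedFDeriv ℝ ℓ f y‖ ≤ 1 := by
    refine (Finset.eventually_all (Finset.range (m+1))).2 (fun ℓ hℓ => ?_)
    have := (htd ℓ (Nat.lt_succ_iff.1 (Finset.mem_range.1 hℓ))).eventually_lt_const
      (by norm_num : (0:ℝ) < 1)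
    exact this.mono (fun y hy => hy.le)
  rw [Filter.eventually_iff, Metric.mem_nhdsWithin_iff] at hev
  obtain ⟨δ, hδ, hδev⟩ := hev
  refine ⟨min ε₀ (min δ 1), by positivity, le_trans (min_le_right _ _) (min_le_right _ _),
    1, zero_le_one, hsm.mono (fun y hy => ⟨Metric.mem_ball.2 (lt_of_lt_of_le
      (Metric.mem_ball.1 hy.1) (min_le_left _ _)), hy.2⟩), fun ℓ hℓ y hy => ?_⟩
  have hy0 : 0 < ‖y‖ := norm_pos_of_mem_S hy
  have hmem := mem_S.1 hy
  have key : ‖y‖ ^ ((ℓ:ℝ) - (b:ℝ)) * ‖iteratedFDeriv ℝ ℓ f y‖ ≤ 1 := by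
    have hyd : y ∈ Metric.ball (0:EuclideanSpace ℝ (Fin n)) δ :=
      mem_ball_zero_iff.2 (lt_of_lt_of_le hmem.1 (le_trans (min_le_right _ _) (min_le_left _ _)))
    exact hδev ⟨hyd, hmem.2⟩ ℓ (Finset.mem_range.2 (by omega))
  calc ‖iteratedFDeriv ℝ ℓ f y‖
      = ‖y‖ ^ ((b:ℝ) - (ℓ:ℝ)) * (‖y‖ ^ ((ℓ:ℝ) - (b:ℝ)) * ‖iteratedFDeriv ℝ ℓ f y‖) := by
        rw [← mul_assoc, ← Real.rpow_add hy0]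
        norm_num
    _ ≤ ‖y‖ ^ ((b:ℝ) - (ℓ:ℝ)) * 1 := by
        exact mul_le_mul_of_nonneg_left key (Real.rpow_nonneg hy0.le _)
    _ = 1 * ‖y‖ ^ ((b:ℝ) - (ℓ:ℝ)) := by ring

lemma littleo_mono {m : ℕ} {a b : ℤ} {f : EuclideanSpace ℝ (Fin n) → ℝ}
    (hab : b ≤ a) (hf : IsLittleOCone n m a f) : IsLittleOCone n m b f := by
  rcases eq_or_lt_of_le hab with h | h
  · exact h ▸ hf
  · exact littleo_of_bigO h (bigO_of_littleo hf)

end Sq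

namespace Sq
variable {n : ℕ}

lemma openS (ε : ℝ) : IsOpen (Metric.ball (0:EuclideanSpace ℝ (Fin n)) ε \ {0}) :=
  Metric.isOpen_ball.sdiff isClosed_singleton

lemma uds (ε : ℝ) : UniqueDiffOn ℝ (Metric.ball (0:EuclideanSpace ℝ (Fin n)) ε \ {0}) :=
  (openS ε).uniqueDiffOn

lemma Ssub {ε ε' : ℝ} (h : ε ≤ ε') :
    (Metric.ball (0:EuclideanSpace ℝ (Fin n)) ε \ {0}) ⊆
      (Metric.ball (0:EuclideanSpace ℝ (Fin n)) ε' \ {0}) := by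
  intro y hy
  rcases mem_S.1 hy with ⟨h1, h2⟩
  exact mem_S.2 ⟨lt_of_lt_of_le h1 h, h2⟩

lemma littleo_zero (m : ℕ) (b : ℤ) : IsLittleOCone n m b (fun _ => 0) := by
  refine ⟨1, one_pos, contDiffOn_const, fun ℓ hℓ => ?_⟩
  have : (fun y : EuclideanSpace ℝ (Fin n) =>
      ‖y‖ ^ ((ℓ:ℝ) - (b:ℝ)) * ‖iteratedFDeriv ℝ ℓ (fun _ => (0:ℝ)) y‖) = fun _ => 0 := by
    funext y
    simp [iteratedFDeriv_zero_fun]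
  rw [this]
  exact tendsto_const_nhds

lemma littleo_add {m : ℕ} {b : ℤ} {f g : EuclideanSpace ℝ (Fin n) → ℝ}
    (hf : IsLittleOCone n m b f) (hg : IsLittleOCone n m b g) :
    IsLittleOCone n m b (fun y => f y + g y) := by
  obtain ⟨εf, hεf, hsf, htf⟩ := hf
  obtain ⟨εg, hεg, hsg, htg⟩ := hg
  set ε := min εf εg with hε
  have hε0 : 0 < ε := lt_min hεf hεg
  have hsubf := Ssub (n := n) (min_le_left εf εg)
  have hsubg := Ssub (n := n) (min_le_right εf εg)
  have hsf' := hsf.mono hsubf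
  have hsg' := hsg.mono hsubg
  refine ⟨ε, hε0, hsf'.add hsg', fun ℓ hℓ => ?_⟩
  have hbd : ∀ y ∈ Metric.ball (0:EuclideanSpace ℝ (Fin n)) ε \ {0},
      ‖y‖ ^ ((ℓ:ℝ) - (b:ℝ)) * ‖iteratedFDeriv ℝ ℓ (fun y => f y + g y) y‖ ≤
        ‖y‖ ^ ((ℓ:ℝ) - (b:ℝ)) * ‖iteratedFDeriv ℝ ℓ f y‖ +
        ‖y‖ ^ ((ℓ:ℝ) - (b:ℝ)) * ‖iteratedFDeriv ℝ ℓ g y‖ := by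
    intro y hy
    have hD : ‖iteratedFDeriv ℝ ℓ (fun y => f y + g y) y‖ ≤
        ‖iteratedFDeriv ℝ ℓ f y‖ + ‖iteratedFDeriv ℝ ℓ g y‖ := by
      rw [← iteratedFDerivWithin_of_isOpen (f := fun y => f y + g y) ℓ (openS ε) hy,
        ← iteratedFDerivWithin_of_isOpen (f := f) ℓ (openS ε) hy,
        ← iteratedFDerivWithin_of_isOpen (f := g) ℓ (openS ε) hy,
        iteratedFDerivWithin_add_apply' ((hsf' y hy).of_le (by exact_mod_cast hℓ))
          ((hsg' y hy).of_le (by exact_mod_cast hℓ)) (uds ε) hy]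
      exact norm_add_le _ _
    calc ‖y‖ ^ ((ℓ:ℝ) - (b:ℝ)) * ‖iteratedFDeriv ℝ ℓ (fun y => f y + g y) y‖
        ≤ ‖y‖ ^ ((ℓ:ℝ) - (b:ℝ)) * (‖iteratedFDeriv ℝ ℓ f y‖ + ‖iteratedFDeriv ℝ ℓ g y‖) :=
          mul_le_mul_of_nonneg_left hD (Real.rpow_nonneg (norm_nonneg y) _)
      _ = _ := by ring
  have hlim : Tendsto (fun y : EuclideanSpace ℝ (Fin n) =>
      ‖y‖ ^ ((ℓ:ℝ) - (b:ℝ)) * ‖iteratedFDeriv ℝ ℓ f y‖ +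
      ‖y‖ ^ ((ℓ:ℝ) - (b:ℝ)) * ‖iteratedFDeriv ℝ ℓ g y‖)
      (𝓝[≠] (0:EuclideanSpace ℝ (Fin n))) (𝓝 0) := by
    simpa using (htf ℓ hℓ).add (htg ℓ hℓ)
  refine squeeze_zero' ?_ ?_ hlim
  · exact Filter.Eventually.of_forall (fun y => by positivity)
  · exact Filter.eventually_iff_exists_mem.2 ⟨_, S_mem ε hε0, hbd⟩

lemma littleo_sum {m : ℕ} {b : ℤ} {ι : Type*} (s : Finset ι)
    (F : ι → EuclideanSpace ℝ (Fin n) → ℝ) (h : ∀ i ∈ s, IsLittleOCone n m b (F i)) :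
    IsLittleOCone n m b (fun y => ∑ i ∈ s, F i y) := by
  induction s using Finset.cons_induction with
  | empty => simpa using littleo_zero (n := n) m b
  | cons a s ha ih =>
      have : (fun y : EuclideanSpace ℝ (Fin n) => ∑ i ∈ Finset.cons a s ha, F i y) =
          fun y => F a y + ∑ i ∈ s, F i y := by
        funext y; rw [Finset.sum_cons]
      rw [this]
      exact littleo_add (h a (Finset.mem_cons_self a _))
        (ih (fun i hi => h i (Finset.mem_cons_of_mem hi)))

end Sq

namespace Sq
variable {n : ℕ}

lemma bigO_mono {m : ℕ} {a b : ℤ} {f : EuclideanSpace ℝ (Fin n) → ℝ}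
    (hab : b ≤ a) (hf : BigOCone n m a f) : BigOCone n m b f := by
  obtain ⟨ε, hε, hε1, C, hC0, hsm, hbd⟩ := hf
  refine ⟨ε, hε, hε1, C, hC0, hsm, fun ℓ hℓ y hy => ?_⟩
  have hy0 : 0 < ‖y‖ := norm_pos_of_mem_S hy
  have hy1 : ‖y‖ ≤ 1 := le_trans (mem_S.1 hy).1.le hε1
  refine le_trans (hbd ℓ hℓ y hy) (mul_le_mul_of_nonneg_left ?_ hC0)
  refine Real.rpow_le_rpow_of_exponent_ge hy0 hy1 ?_
  have : (b:ℝ) ≤ (a:ℝ) := by exact_mod_cast hab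
  linarith

lemma bigO_add {m : ℕ} {a : ℤ} {f g : EuclideanSpace ℝ (Fin n) → ℝ}
    (hf : BigOCone n m a f) (hg : BigOCone n m a g) :
    BigOCone n m a (fun y => f y + g y) := by
  obtain ⟨εf, hεf, hεf1, Cf, hCf0, hsf, hbf⟩ := hf
  obtain ⟨εg, hεg, hεg1, Cg, hCg0, hsg, hbg⟩ := hg
  set ε := min εf εg with hε
  have hε0 : 0 < ε := lt_min hεf hεg
  have hsubf := Ssub (n := n) (min_le_left εf εg)
  have hsubg := Ssub (n := n) (min_le_right εf εg)
  have hsf' := hsf.mono hsubf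
  have hsg' := hsg.mono hsubg
  refine ⟨ε, hε0, le_trans (min_le_left _ _) hεf1, Cf + Cg, by positivity,
    hsf'.add hsg', fun ℓ hℓ y hy => ?_⟩
  have hD : ‖iteratedFDeriv ℝ ℓ (fun y => f y + g y) y‖ ≤
      ‖iteratedFDeriv ℝ ℓ f y‖ + ‖iteratedFDeriv ℝ ℓ g y‖ := by
    rw [← iteratedFDerivWithin_of_isOpen (f := fun y => f y + g y) ℓ (openS ε) hy,
      ← iteratedFDerivWithin_of_isOpen (f := f) ℓ (openS ε) hy,
      ← iteratedFDerivWithin_of_isOpen (f := g) ℓ (openS ε) hy,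
      iteratedFDerivWithin_add_apply' ((hsf' y hy).of_le (by exact_mod_cast hℓ))
        ((hsg' y hy).of_le (by exact_mod_cast hℓ)) (uds ε) hy]
    exact norm_add_le _ _
  calc ‖iteratedFDeriv ℝ ℓ (fun y => f y + g y) y‖
      ≤ ‖iteratedFDeriv ℝ ℓ f y‖ + ‖iteratedFDeriv ℝ ℓ g y‖ := hD
    _ ≤ Cf * ‖y‖ ^ ((a:ℝ) - (ℓ:ℝ)) + Cg * ‖y‖ ^ ((a:ℝ) - (ℓ:ℝ)) :=
        add_le_add (hbf ℓ hℓ y (hsubf hy)) (hbg ℓ hℓ y (hsubg hy))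
    _ = (Cf + Cg) * ‖y‖ ^ ((a:ℝ) - (ℓ:ℝ)) := by ring

lemma bigO_zero (m : ℕ) (a : ℤ) : BigOCone n m a (fun _ => 0) := by
  refine ⟨1, one_pos, le_refl 1, 0, le_refl 0, contDiffOn_const, fun ℓ hℓ y hy => ?_⟩
  simp [iteratedFDeriv_zero_fun]

lemma bigO_sum {m : ℕ} {a : ℤ} {ι : Type*} (s : Finset ι)
    (F : ι → EuclideanSpace ℝ (Fin n) → ℝ) (h : ∀ i ∈ s, BigOCone n m a (F i)) :
    BigOCone n m a (fun y => ∑ i ∈ s, F i y) := by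
  induction s using Finset.cons_induction with
  | empty => simpa using bigO_zero (n := n) m a
  | cons c s hc ih =>
      have : (fun y : EuclideanSpace ℝ (Fin n) => ∑ i ∈ Finset.cons c s hc, F i y) =
          fun y => F c y + ∑ i ∈ s, F i y := by
        funext y; rw [Finset.sum_cons]
      rw [this]
      exact bigO_add (h c (Finset.mem_cons_self c _))
        (ih (fun i hi => h i (Finset.mem_cons_of_mem hi)))

end Sq

namespace Sq
variable {n : ℕ}

lemma bigO_mul_littleo {m : ℕ} {a b : ℤ} {f g : EuclideanSpace ℝ (Fin n) → ℝ}
    (hf : BigOCone n m a f) (hg : IsLittleOCone n m b g) :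
    IsLittleOCone n m (a + b) (fun y => f y * g y) := by
  obtain ⟨εf, hεf, hεf1, Cf, hCf0, hsf, hbf⟩ := hf
  obtain ⟨εg, hεg, hsg, htg⟩ := hg
  set ε := min εf εg with hεdef
  have hε0 : 0 < ε := lt_min hεf hεg
  have hsubf := Ssub (n := n) (min_le_left εf εg)
  have hsubg := Ssub (n := n) (min_le_right εf εg)
  have hsf' := hsf.mono hsubf
  have hsg' := hsg.mono hsubg
  refine ⟨ε, hε0, hsf'.mul hsg', fun ℓ hℓ => ?_⟩
  have hG : Tendsto (fun y : EuclideanSpace ℝ (Fin n) => ∑ i ∈ Finset.range (ℓ+1),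
      ((ℓ.choose i : ℝ) * Cf) *
        (‖y‖ ^ (((ℓ - i : ℕ):ℝ) - (b:ℝ)) * ‖iteratedFDeriv ℝ (ℓ - i) g y‖))
      (𝓝[≠] (0:EuclideanSpace ℝ (Fin n))) (𝓝 0) := by
    have h0 := tendsto_finset_sum (Finset.range (ℓ+1))
      (fun i (_ : i ∈ Finset.range (ℓ+1)) =>
        ((htg (ℓ - i) (le_trans (Nat.sub_le _ _) hℓ)).const_mul ((ℓ.choose i : ℝ) * Cf)))
    simpa using h0
  refine squeeze_zero' (Filter.Eventually.of_forall (fun y => by positivity))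
    (Filter.eventually_iff_exists_mem.2 ⟨_, S_mem ε hε0, ?_⟩) hG
  intro y hy
  have hy0 : 0 < ‖y‖ := norm_pos_of_mem_S hy
  have hmul : ‖iteratedFDeriv ℝ ℓ (fun y => f y * g y) y‖ ≤
      ∑ i ∈ Finset.range (ℓ+1), (ℓ.choose i : ℝ) * ‖iteratedFDeriv ℝ i f y‖ *
        ‖iteratedFDeriv ℝ (ℓ - i) g y‖ := by
    calc ‖iteratedFDeriv ℝ ℓ (fun y => f y * g y) y‖
        = ‖iteratedFDerivWithin ℝ ℓ (fun y => f y * g y)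
            (Metric.ball (0:EuclideanSpace ℝ (Fin n)) ε \ {0}) y‖ := by
          rw [iteratedFDerivWithin_of_isOpen (f := fun y => f y * g y) ℓ (openS ε) hy]
      _ ≤ ∑ i ∈ Finset.range (ℓ+1), (ℓ.choose i : ℝ) *
            ‖iteratedFDerivWithin ℝ i f (Metric.ball (0:EuclideanSpace ℝ (Fin n)) ε \ {0}) y‖ *
            ‖iteratedFDerivWithin ℝ (ℓ - i) g
              (Metric.ball (0:EuclideanSpace ℝ (Fin n)) ε \ {0}) y‖ :=
          norm_iteratedFDerivWithin_mul_le hsf' hsg' (uds ε) hy (by exact_mod_cast hℓ)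
      _ = ∑ i ∈ Finset.range (ℓ+1), (ℓ.choose i : ℝ) * ‖iteratedFDeriv ℝ i f y‖ *
            ‖iteratedFDeriv ℝ (ℓ - i) g y‖ := by
          refine Finset.sum_congr rfl (fun i hi => ?_)
          rw [iteratedFDerivWithin_of_isOpen (f := f) i (openS ε) hy,
            iteratedFDerivWithin_of_isOpen (f := g) (ℓ - i) (openS ε) hy]
  have hexp : ((ℓ:ℝ) - ((a + b : ℤ):ℝ)) = (ℓ:ℝ) - ((a:ℝ) + (b:ℝ)) := by push_cast; ring
  calc ‖y‖ ^ ((ℓ:ℝ) - ((a + b : ℤ):ℝ)) * ‖iteratedFDeriv ℝ ℓ (fun y => f y * g y) y‖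
      ≤ ‖y‖ ^ ((ℓ:ℝ) - ((a + b : ℤ):ℝ)) * ∑ i ∈ Finset.range (ℓ+1),
          (ℓ.choose i : ℝ) * ‖iteratedFDeriv ℝ i f y‖ * ‖iteratedFDeriv ℝ (ℓ - i) g y‖ :=
        mul_le_mul_of_nonneg_left hmul (Real.rpow_nonneg hy0.le _)
    _ = ∑ i ∈ Finset.range (ℓ+1), ‖y‖ ^ ((ℓ:ℝ) - ((a + b : ℤ):ℝ)) *
          ((ℓ.choose i : ℝ) * ‖iteratedFDeriv ℝ i f y‖ * ‖iteratedFDeriv ℝ (ℓ - i) g y‖) :=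
        Finset.mul_sum _ _ _
    _ ≤ ∑ i ∈ Finset.range (ℓ+1), ((ℓ.choose i : ℝ) * Cf) *
          (‖y‖ ^ (((ℓ - i : ℕ):ℝ) - (b:ℝ)) * ‖iteratedFDeriv ℝ (ℓ - i) g y‖) := by
        refine Finset.sum_le_sum (fun i hi => ?_)
        have hi' : i ≤ ℓ := Nat.lt_succ_iff.1 (Finset.mem_range.1 hi)
        have h1 : ‖iteratedFDeriv ℝ i f y‖ ≤ Cf * ‖y‖ ^ ((a:ℝ) - (i:ℝ)) :=
          hbf i (le_trans hi' hℓ) y (hsubf hy)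
        have hcast : ((ℓ - i : ℕ):ℝ) = (ℓ:ℝ) - (i:ℝ) := by
          rw [Nat.cast_sub hi']
        have step : ‖y‖ ^ ((ℓ:ℝ) - ((a + b : ℤ):ℝ)) * ‖iteratedFDeriv ℝ i f y‖ ≤
            Cf * ‖y‖ ^ (((ℓ - i : ℕ):ℝ) - (b:ℝ)) := by
          calc ‖y‖ ^ ((ℓ:ℝ) - ((a + b : ℤ):ℝ)) * ‖iteratedFDeriv ℝ i f y‖
              ≤ ‖y‖ ^ ((ℓ:ℝ) - ((a + b : ℤ):ℝ)) * (Cf * ‖y‖ ^ ((a:ℝ) - (i:ℝ))) :=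
                mul_le_mul_of_nonneg_left h1 (Real.rpow_nonneg hy0.le _)
            _ = Cf * ‖y‖ ^ ((a:ℝ) - (i:ℝ) + ((ℓ:ℝ) - ((a + b : ℤ):ℝ))) := by
                rw [mul_comm, mul_assoc, ← Real.rpow_add hy0]
            _ = Cf * ‖y‖ ^ (((ℓ - i : ℕ):ℝ) - (b:ℝ)) := by
                rw [hcast, hexp]
                ring_nf
        calc ‖y‖ ^ ((ℓ:ℝ) - ((a + b : ℤ):ℝ)) *
              ((ℓ.choose i : ℝ) * ‖iteratedFDeriv ℝ i f y‖ * ‖iteratedFDeriv ℝ (ℓ - i) g y‖)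
            = (ℓ.choose i : ℝ) * ((‖y‖ ^ ((ℓ:ℝ) - ((a + b : ℤ):ℝ)) *
                ‖iteratedFDeriv ℝ i f y‖) * ‖iteratedFDeriv ℝ (ℓ - i) g y‖) := by ring
          _ ≤ (ℓ.choose i : ℝ) * ((Cf * ‖y‖ ^ (((ℓ - i : ℕ):ℝ) - (b:ℝ))) *
                ‖iteratedFDeriv ℝ (ℓ - i) g y‖) := by
              refine mul_le_mul_of_nonneg_left
                (mul_le_mul_of_nonneg_right step (norm_nonneg _)) (by positivity)
          _ = ((ℓ.choose i : ℝ) * Cf) *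
                (‖y‖ ^ (((ℓ - i : ℕ):ℝ) - (b:ℝ)) * ‖iteratedFDeriv ℝ (ℓ - i) g y‖) := by ring

end Sq

namespace Sq
variable {n : ℕ}

set_option maxHeartbeats 1000000 in
lemma bigO_of_posHomogeneous {m d : ℕ} {f : EuclideanSpace ℝ (Fin n) → ℝ}
    (hsm : ContDiffOn ℝ (m : ℕ∞) f {(0 : EuclideanSpace ℝ (Fin n))}ᶜ)
    (hhom : ∀ c : ℝ, 0 < c → ∀ y : EuclideanSpace ℝ (Fin n), f (c • y) = c ^ d * f y) :
    BigOCone n m (d : ℤ) f := by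
  classical
  set s : Set (EuclideanSpace ℝ (Fin n)) := {(0 : EuclideanSpace ℝ (Fin n))}ᶜ with hsdef
  have hos : IsOpen s := isOpen_compl_singleton
  have hud : UniqueDiffOn ℝ s := hos.uniqueDiffOn
  have key : ∀ ℓ : ℕ, ∃ C : ℝ, 0 ≤ C ∧ (ℓ ≤ m → ∀ y : EuclideanSpace ℝ (Fin n), y ≠ 0 →
      ‖iteratedFDeriv ℝ ℓ f y‖ ≤ C * ‖y‖ ^ ((d:ℝ) - (ℓ:ℝ))) := by
    intro ℓ
    by_cases hℓ : ℓ ≤ m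
    swap
    · exact ⟨0, le_refl 0, fun h => absurd h hℓ⟩
    have hcont : ContinuousOn (iteratedFDerivWithin ℝ ℓ f s) s :=
      hsm.continuousOn_iteratedFDerivWithin (by exact_mod_cast hℓ) hud
    have hsub : Metric.sphere (0 : EuclideanSpace ℝ (Fin n)) 1 ⊆ s := by
      intro u hu
      have : ‖u‖ = 1 := by simpa using hu
      simp only [hsdef, Set.mem_compl_iff, Set.mem_singleton_iff]
      intro h0
      rw [h0] at this
      simp at this
    obtain ⟨C, hC⟩ := (isCompact_sphere (0 : EuclideanSpace ℝ (Fin n)) 1).exists_bound_of_continuousOn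
      (hcont.mono hsub)
    refine ⟨max C 0, le_max_right _ _, fun _ y hy0 => ?_⟩
    set c : ℝ := ‖y‖ with hcdef
    have hc : 0 < c := norm_pos_iff.2 hy0
    set L : EuclideanSpace ℝ (Fin n) →L[ℝ] EuclideanSpace ℝ (Fin n) :=
      c⁻¹ • ContinuousLinearMap.id ℝ (EuclideanSpace ℝ (Fin n)) with hLdef
    have hLapp : ∀ z, L z = c⁻¹ • z := fun z => rfl
    set g : EuclideanSpace ℝ (Fin n) → ℝ := f ∘ L with hgdef
    have hfz : f = (c ^ d) • g := by
      funext z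
      show f z = c ^ d • g z
      have h1 : g z = (c⁻¹) ^ d * f z := by
        rw [hgdef]
        show f (L z) = (c⁻¹) ^ d * f z
        rw [hLapp, hhom c⁻¹ (inv_pos.2 hc) z]
      rw [h1, smul_eq_mul, ← mul_assoc, ← mul_pow, mul_inv_cancel₀ hc.ne', one_pow, one_mul]
    have hpre : L ⁻¹' s = s := by
      ext z
      simp only [Set.mem_preimage, hsdef, Set.mem_compl_iff, Set.mem_singleton_iff, hLapp]
      rw [smul_eq_zero]
      simp [inv_eq_zero, hc.ne']
    have hcomp : ContDiffOn ℝ (m : ℕ∞) g s := by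
      rw [hgdef, ← hpre]
      exact hsm.comp_continuousLinearMap L
    have hy_s : y ∈ s := hy0
    have hLy_sphere : L y ∈ Metric.sphere (0 : EuclideanSpace ℝ (Fin n)) 1 := by
      simp only [mem_sphere_iff_norm, sub_zero, hLapp, norm_smul, norm_inv, Real.norm_eq_abs,
        abs_of_pos hc]
      rw [← hcdef]
      exact inv_mul_cancel₀ hc.ne'
    have hLy_s : L y ∈ s := hsub hLy_sphere
    have h2 : iteratedFDerivWithin ℝ ℓ f s y =
        c ^ d • iteratedFDerivWithin ℝ ℓ g s y := by
      conv_lhs => rw [hfz]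
      exact iteratedFDerivWithin_const_smul_apply ((hcomp y hy_s).of_le (by exact_mod_cast hℓ)) hud hy_s
    have h3 : iteratedFDerivWithin ℝ ℓ g s y =
        (iteratedFDerivWithin ℝ ℓ f s (L y)).compContinuousLinearMap (fun _ => L) := by
      have h4 := L.iteratedFDerivWithin_comp_right (f := f) hsm hud
        (by rw [hpre]; exact hud) (x := y) (by rw [hLapp]; exact hLy_s) (by exact_mod_cast hℓ)
      rw [hpre] at h4
      exact h4
    have hLnorm : ‖L‖ ≤ c⁻¹ := by
      rw [hLdef]
      calc ‖c⁻¹ • ContinuousLinearMap.id ℝ (EuclideanSpace ℝ (Fin n))‖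
          ≤ ‖c⁻¹‖ * ‖ContinuousLinearMap.id ℝ (EuclideanSpace ℝ (Fin n))‖ :=
            ContinuousLinearMap.opNorm_smul_le _ _
        _ ≤ c⁻¹ * 1 := by
            refine mul_le_mul ?_ ContinuousLinearMap.norm_id_le (norm_nonneg _) (inv_pos.2 hc).le
            rw [Real.norm_eq_abs, abs_of_pos (inv_pos.2 hc)]
        _ = c⁻¹ := mul_one _
    have hA : ‖iteratedFDerivWithin ℝ ℓ f s (L y)‖ ≤ max C 0 :=
      le_trans (hC (L y) hLy_sphere) (le_max_left _ _)
    have hprod : ∏ _i : Fin ℓ, ‖L‖ ≤ (c⁻¹) ^ ℓ := by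
      calc ∏ _i : Fin ℓ, ‖L‖ ≤ ∏ _i : Fin ℓ, c⁻¹ :=
            Finset.prod_le_prod (fun _ _ => norm_nonneg _) (fun _ _ => hLnorm)
        _ = (c⁻¹) ^ ℓ := by
            rw [Finset.prod_const, Finset.card_univ, Fintype.card_fin]
    have hfinal : ‖iteratedFDeriv ℝ ℓ f y‖ ≤ (max C 0) * (c ^ d * (c⁻¹) ^ ℓ) := by
      rw [← iteratedFDerivWithin_of_isOpen (f := f) ℓ hos hy_s, h2, h3]
      calc ‖c ^ d • (iteratedFDerivWithin ℝ ℓ f s (L y)).compContinuousLinearMap (fun _ => L)‖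
          ≤ ‖c ^ d‖ * ‖(iteratedFDerivWithin ℝ ℓ f s (L y)).compContinuousLinearMap
              (fun _ => L)‖ := ContinuousMultilinearMap.opNorm_smul_le _ _
        _ ≤ c ^ d * (‖iteratedFDerivWithin ℝ ℓ f s (L y)‖ * ∏ _i : Fin ℓ, ‖L‖) := by
            rw [Real.norm_eq_abs, abs_of_pos (pow_pos hc d)]
            exact mul_le_mul_of_nonneg_left
              (ContinuousMultilinearMap.norm_compContinuousLinearMap_le _ _)
              (pow_pos hc d).le
        _ ≤ c ^ d * ((max C 0) * (c⁻¹) ^ ℓ) := by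
            refine mul_le_mul_of_nonneg_left ?_ (pow_pos hc d).le
            exact mul_le_mul hA hprod (Finset.prod_nonneg (fun _ _ => norm_nonneg _))
              (le_max_right _ _)
        _ = (max C 0) * (c ^ d * (c⁻¹) ^ ℓ) := by ring
    have harith : c ^ d * (c⁻¹) ^ ℓ = c ^ ((d:ℝ) - (ℓ:ℝ)) := by
      have h1 : c ^ d = c ^ ((d:ℕ):ℝ) := (Real.rpow_natCast c d).symm
      have h2 : c⁻¹ ^ ℓ = c ^ (-(ℓ:ℝ)) := by
        rw [← Real.rpow_natCast c⁻¹ ℓ, Real.inv_rpow hc.le, ← Real.rpow_neg hc.le]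
      rw [h1, h2, ← Real.rpow_add hc, sub_eq_add_neg]
    rw [harith] at hfinal
    exact hfinal
  choose Cs hCs0 hCs using key
  refine ⟨1, one_pos, le_refl 1, ∑ j ∈ Finset.range (m+1), Cs j,
    Finset.sum_nonneg (fun j _ => hCs0 j),
    hsm.mono (fun y hy => (mem_S.1 hy).2), fun ℓ hℓ y hy => ?_⟩
  have hy0 := (mem_S.1 hy).2
  have hb := hCs ℓ hℓ y hy0
  have hcast : (((d:ℤ)):ℝ) = (d:ℝ) := by push_cast; ring
  rw [hcast]
  refine le_trans hb (mul_le_mul_of_nonneg_right ?_ (Real.rpow_nonneg (norm_nonneg _) _))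
  exact Finset.single_le_sum (fun j _ => hCs0 j) (Finset.mem_range.2 (by omega))

end Sq

namespace Sq
open MvPolynomial
variable {n : ℕ}

lemma contDiff_evalPoly (m : ℕ∞) (P : MvPolynomial (Fin n) ℝ) :
    ContDiff ℝ m (fun y : EuclideanSpace ℝ (Fin n) => MvPolynomial.eval (fun i => y i) P) := by
  induction P using MvPolynomial.induction_on with
  | C a => simpa using contDiff_const
  | add p q hp hq =>
      have : (fun y : EuclideanSpace ℝ (Fin n) => MvPolynomial.eval (fun i => y i) (p + q)) =
          fun y => MvPolynomial.eval (fun i => y i) p + MvPolynomial.eval (fun i => y i) q := by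
        funext y; rw [map_add]
      rw [this]; exact hp.add hq
  | mul_X p i hp =>
      have : (fun y : EuclideanSpace ℝ (Fin n) => MvPolynomial.eval (fun i => y i) (p * X i)) =
          fun y => MvPolynomial.eval (fun i => y i) p * y i := by
        funext y; rw [map_mul, eval_X]
      rw [this]
      exact hp.mul (EuclideanSpace.proj (𝕜 := ℝ) (ι := Fin n) i).contDiff

lemma eval_homog {P : MvPolynomial (Fin n) ℝ} {d : ℕ} (hP : P.IsHomogeneous d) (c : ℝ)
    (x : Fin n → ℝ) :
    MvPolynomial.eval (fun i => c * x i) P = c ^ d * MvPolynomial.eval x P := by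
  rw [MvPolynomial.eval_eq, MvPolynomial.eval_eq, Finset.mul_sum]
  refine Finset.sum_congr rfl (fun mo hmo => ?_)
  have hd := hP (MvPolynomial.mem_support_iff.1 hmo)
  have hsum : ∑ i ∈ mo.support, mo i = d := by
    rw [← hd, Finsupp.weight_apply]
    simp [Finsupp.sum]
  have hprod : ∏ i ∈ mo.support, (c * x i) ^ mo i =
      c ^ d * ∏ i ∈ mo.support, x i ^ mo i := by
    rw [← hsum, ← Finset.prod_pow_eq_pow_sum]
    rw [← Finset.prod_mul_distrib]
    refine Finset.prod_congr rfl (fun i _ => ?_)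
    rw [mul_pow]
  rw [hprod]
  ring

lemma smul_apply' (c : ℝ) (y : EuclideanSpace ℝ (Fin n)) (i : Fin n) : (c • y) i = c * y i :=
  rfl

lemma bigO_P {m : ℕ} {d : ℕ} {P : MvPolynomial (Fin n) ℝ} (hP : P.IsHomogeneous d) :
    BigOCone n m (d : ℤ) (fun y : EuclideanSpace ℝ (Fin n) =>
      MvPolynomial.eval (fun i => y i) P) := by
  refine bigO_of_posHomogeneous ((contDiff_evalPoly m P).contDiffOn) (fun c hc y => ?_)
  have := eval_homog hP c (fun i => y i)
  simpa [smul_apply'] using this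

lemma bigO_rQ {m : ℕ} {e : ℕ} {Q : MvPolynomial (Fin n) ℝ} (hQ : Q.IsHomogeneous e) :
    BigOCone n m ((e : ℤ) + 1) (fun y : EuclideanSpace ℝ (Fin n) =>
      ‖y‖ * MvPolynomial.eval (fun i => y i) Q) := by
  have hcast : ((e + 1 : ℕ) : ℤ) = (e : ℤ) + 1 := by push_cast; ring
  rw [← hcast]
  refine bigO_of_posHomogeneous ?_ (fun c hc y => ?_)
  · intro y hy
    have hy0 : y ≠ 0 := hy
    have h1 : ContDiffAt ℝ (m : ℕ∞) (norm : EuclideanSpace ℝ (Fin n) → ℝ) y :=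
      contDiffAt_norm ℝ hy0
    exact (h1.contDiffWithinAt.mul ((contDiff_evalPoly m Q).contDiffAt.contDiffWithinAt))
  · have h1 : ‖c • y‖ = c * ‖y‖ := by
      rw [norm_smul, Real.norm_eq_abs, abs_of_pos hc]
    have h2 := eval_homog hQ c (fun i => y i)
    have h3 : MvPolynomial.eval (fun i => (c • y) i) Q =
        c ^ e * MvPolynomial.eval (fun i => y i) Q := h2
    rw [h1, h3]
    ring

end Sq


end

open Sq

set_option maxHeartbeats 1000000

/-- if `ψ` admits an admissible expansion starting at order `1` with
remainder `o_k(r^k)`, then `ψ²` admits an admissible expansion starting at order `2`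
with remainder `o_k(r^{k+1})`. -/
theorem square_of_admissible_expansion
    (n k : ℕ) (hn : 1 ≤ n) (hk : 1 ≤ k)
    (ψ : EuclideanSpace ℝ (Fin n) → ℝ)
    (P Q : ℕ → MvPolynomial (Fin n) ℝ)
    (hP : ∀ p, 1 ≤ p → p ≤ k → (P p).IsHomogeneous p)
    (hQ : ∀ p, 1 ≤ p → p ≤ k → (Q p).IsHomogeneous (p - 1))
    (h : IsLittleOCone n k (k : ℤ) (fun y =>
        ψ y - ∑ p ∈ Finset.Icc 1 k,
          (MvPolynomial.eval (fun i => y i) (P p)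
            + ‖y‖ * MvPolynomial.eval (fun i => y i) (Q p)))) :
    ∃ P' Q' : ℕ → MvPolynomial (Fin n) ℝ,
      (∀ p, 2 ≤ p → p ≤ k + 1 → (P' p).IsHomogeneous p) ∧
      (∀ p, 2 ≤ p → p ≤ k + 1 → (Q' p).IsHomogeneous (p - 1)) ∧
      IsLittleOCone n k ((k : ℤ) + 1) (fun y =>
        (ψ y) ^ 2 - ∑ p ∈ Finset.Icc 2 (k + 1),
          (MvPolynomial.eval (fun i => y i) (P' p)
            + ‖y‖ * MvPolynomial.eval (fun i => y i) (Q' p))) := by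
  classical
  set t : ℕ → EuclideanSpace ℝ (Fin n) → ℝ := fun p y =>
    MvPolynomial.eval (fun i => y i) (P p) + ‖y‖ * MvPolynomial.eval (fun i => y i) (Q p)
    with htdef
  set S : EuclideanSpace ℝ (Fin n) → ℝ := fun y => ∑ p ∈ Finset.Icc 1 k, t p y with hSdef
  set R : EuclideanSpace ℝ (Fin n) → ℝ := fun y => ψ y - S y with hRdef
  have hR : IsLittleOCone n k (k : ℤ) R := h
  -- each basic term is big-O of order p
  have hBt : ∀ p, 1 ≤ p → p ≤ k → BigOCone n k (p : ℤ) (t p) := by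
    intro p h1 h2
    have hPp := bigO_P (m := k) (hP p h1 h2)
    have hQp := bigO_rQ (m := k) (hQ p h1 h2)
    have hcast : ((p - 1 : ℕ) : ℤ) + 1 = (p : ℤ) := by omega
    rw [hcast] at hQp
    exact bigO_add hPp hQp
  have hS : BigOCone n k (1 : ℤ) S := by
    apply bigO_sum
    intro p hp
    rcases Finset.mem_Icc.1 hp with ⟨h1, h2⟩
    exact bigO_mono (by exact_mod_cast h1) (hBt p h1 h2)
  -- the polynomials
  set A : Finset (ℕ × ℕ) := Finset.Icc 1 k ×ˢ Finset.Icc 1 k with hAdef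
  set Nn : MvPolynomial (Fin n) ℝ := ∑ i : Fin n, (MvPolynomial.X i) ^ 2 with hNndef
  have hNhom : Nn.IsHomogeneous 2 := by
    apply MvPolynomial.IsHomogeneous.sum
    intro i _
    exact MvPolynomial.isHomogeneous_X_pow i 2
  have hevalN : ∀ y : EuclideanSpace ℝ (Fin n),
      MvPolynomial.eval (fun i => y i) Nn = ‖y‖ ^ 2 := by
    intro y
    rw [hNndef, map_sum]
    have hnorm : ‖y‖ ^ 2 = ∑ i, (y i) ^ 2 := by
      rw [EuclideanSpace.norm_eq, Real.sq_sqrt (by positivity)]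
      exact Finset.sum_congr rfl (fun i _ => by rw [Real.norm_eq_abs, sq_abs])
    rw [hnorm]
    exact Finset.sum_congr rfl (fun i _ => by
      rw [map_pow, MvPolynomial.eval_X])
  set P' : ℕ → MvPolynomial (Fin n) ℝ := fun mm =>
    ∑ x ∈ A.filter (fun x => x.1 + x.2 = mm),
      (P x.1 * P x.2 + Nn * Q x.1 * Q x.2) with hP'def
  set Q' : ℕ → MvPolynomial (Fin n) ℝ := fun mm =>
    ∑ x ∈ A.filter (fun x => x.1 + x.2 = mm),
      (P x.1 * Q x.2 + P x.2 * Q x.1) with hQ'def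
  have memA : ∀ x : ℕ × ℕ, x ∈ A → 1 ≤ x.1 ∧ x.1 ≤ k ∧ 1 ≤ x.2 ∧ x.2 ≤ k := by
    intro x hx
    rcases Finset.mem_product.1 hx with ⟨hx1, hx2⟩
    rcases Finset.mem_Icc.1 hx1 with ⟨a1, a2⟩
    rcases Finset.mem_Icc.1 hx2 with ⟨b1, b2⟩
    exact ⟨a1, a2, b1, b2⟩
  refine ⟨P', Q', ?_, ?_, ?_⟩
  · intro p h2 hk1
    apply MvPolynomial.IsHomogeneous.sum
    intro x hx
    rcases Finset.mem_filter.1 hx with ⟨hxA, hxs⟩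
    rcases memA x hxA with ⟨a1, a2, b1, b2⟩
    apply MvPolynomial.IsHomogeneous.add
    · have := (hP x.1 a1 a2).mul (hP x.2 b1 b2)
      rwa [hxs] at this
    · have := ((hNhom.mul (hQ x.1 a1 a2)).mul (hQ x.2 b1 b2))
      have heq : 2 + (x.1 - 1) + (x.2 - 1) = p := by omega
      rwa [heq] at this
  · intro p h2 hk1
    apply MvPolynomial.IsHomogeneous.sum
    intro x hx
    rcases Finset.mem_filter.1 hx with ⟨hxA, hxs⟩
    rcases memA x hxA with ⟨a1, a2, b1, b2⟩
    apply MvPolynomial.IsHomogeneous.add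
    · have := (hP x.1 a1 a2).mul (hQ x.2 b1 b2)
      have heq : x.1 + (x.2 - 1) = p - 1 := by omega
      rwa [heq] at this
    · have := (hP x.2 b1 b2).mul (hQ x.1 a1 a2)
      have heq : x.2 + (x.1 - 1) = p - 1 := by omega
      rwa [heq] at this
  -- the analytic estimate
  have hmaps : ∀ x ∈ A.filter (fun x => x.1 + x.2 ≤ k + 1),
      x.1 + x.2 ∈ Finset.Icc 2 (k + 1) := by
    intro x hx
    rcases Finset.mem_filter.1 hx with ⟨hxA, hxs⟩
    rcases memA x hxA with ⟨a1, a2, b1, b2⟩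
    exact Finset.mem_Icc.2 ⟨by omega, hxs⟩
  have hidentity : (fun y : EuclideanSpace ℝ (Fin n) => (ψ y) ^ 2 -
      ∑ p ∈ Finset.Icc 2 (k + 1),
        (MvPolynomial.eval (fun i => y i) (P' p)
          + ‖y‖ * MvPolynomial.eval (fun i => y i) (Q' p))) =
    fun y => (∑ x ∈ A.filter (fun x => ¬ (x.1 + x.2 ≤ k + 1)), t x.1 y * t x.2 y) +
      (S y * R y + (R y * S y + R y * R y)) := by
    funext y
    have hψ : ψ y = S y + R y := by rw [hRdef]; ring
    have hSS : S y * S y = ∑ x ∈ A, t x.1 y * t x.2 y := by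
      rw [hSdef, hAdef]
      rw [Finset.sum_mul_sum, Finset.sum_product]
    have hsplit : ∑ x ∈ A, t x.1 y * t x.2 y =
        (∑ x ∈ A.filter (fun x => x.1 + x.2 ≤ k + 1), t x.1 y * t x.2 y) +
        (∑ x ∈ A.filter (fun x => ¬ (x.1 + x.2 ≤ k + 1)), t x.1 y * t x.2 y) :=
      (Finset.sum_filter_add_sum_filter_not _ _ _).symm
    have htrunc : ∑ p ∈ Finset.Icc 2 (k + 1),
        (MvPolynomial.eval (fun i => y i) (P' p)
          + ‖y‖ * MvPolynomial.eval (fun i => y i) (Q' p)) =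
        ∑ x ∈ A.filter (fun x => x.1 + x.2 ≤ k + 1), t x.1 y * t x.2 y := by
      rw [← Finset.sum_fiberwise_of_maps_to (g := fun x : ℕ × ℕ => x.1 + x.2) hmaps
        (fun x => t x.1 y * t x.2 y)]
      refine Finset.sum_congr rfl (fun p hp => ?_)
      have hfib : ((A.filter (fun x => x.1 + x.2 ≤ k + 1)).filter
          (fun x => x.1 + x.2 = p)) = A.filter (fun x => x.1 + x.2 = p) := by
        rw [Finset.filter_filter]
        refine Finset.filter_congr (fun x hx => ?_)
        rcases Finset.mem_Icc.1 hp with ⟨hp2, hpk⟩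
        constructor
        · exact fun hh => hh.2
        · exact fun hh => ⟨by omega, hh⟩
      rw [hfib, hP'def, hQ'def, map_sum, map_sum, Finset.mul_sum,
        ← Finset.sum_add_distrib]
      refine Finset.sum_congr rfl (fun x hx => ?_)
      rw [htdef]
      simp only [map_add, map_mul, hevalN y]
      ring
    have hexp : (S y + R y) ^ 2 =
        S y * S y + (S y * R y + (R y * S y + R y * R y)) := by ring
    rw [hψ, hexp, hSS, hsplit, htrunc]
    ring
  rw [hidentity]
  -- each high-order product term
  have hE : IsLittleOCone n k ((k : ℤ) + 1) (fun y =>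
      ∑ x ∈ A.filter (fun x => ¬ (x.1 + x.2 ≤ k + 1)), t x.1 y * t x.2 y) := by
    apply littleo_sum
    intro x hx
    rcases Finset.mem_filter.1 hx with ⟨hxA, hxs⟩
    rcases memA x hxA with ⟨a1, a2, b1, b2⟩
    have h1 := hBt x.1 a1 a2
    have h2 := littleo_of_bigO (by omega : (x.2 : ℤ) - 1 < (x.2 : ℤ)) (hBt x.2 b1 b2)
    have h3 := bigO_mul_littleo h1 h2
    exact littleo_mono (by omega : (k : ℤ) + 1 ≤ (x.1 : ℤ) + ((x.2 : ℤ) - 1)) h3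
  have hSR : IsLittleOCone n k ((k : ℤ) + 1) (fun y => S y * R y) := by
    have := bigO_mul_littleo hS hR
    rwa [show (1 : ℤ) + (k : ℤ) = (k : ℤ) + 1 by ring] at this
  have hRS : IsLittleOCone n k ((k : ℤ) + 1) (fun y => R y * S y) := by
    have heq : (fun y : EuclideanSpace ℝ (Fin n) => R y * S y) = fun y => S y * R y :=
      funext (fun y => mul_comm _ _)
    rw [heq]
    exact hSR
  have hRR : IsLittleOCone n k ((k : ℤ) + 1) (fun y => R y * R y) := by
    have := bigO_mul_littleo (bigO_of_littleo hR) hR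
    exact littleo_mono (by omega : (k : ℤ) + 1 ≤ (k : ℤ) + (k : ℤ)) this
  exact littleo_add hE (littleo_add hSR (littleo_add hRS hRR))
end

section
/- Let ε > 0, let h : (0, ε] → ℝ be continuous and bounded, and let c ∈ ℝ. Then there exist δ ∈ (0, ε] and a unique C¹ function y : (0, δ] → ℝ such that y′(r) = y(r)² + (1/2) h(r) for all r ∈ (0, δ] and y(r) → c as r → 0⁺. Moreover y is bounded on (0, δ] and r·y(r) → 0 as r → 0⁺. -/
open Filter Topology MeasureTheory

/-- the Riccati equation `y' = y² + h/2` on `(0,δ]`, with `h` continuous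
and bounded on `(0,ε]` and prescribed limit `c` at the singular endpoint `r = 0`, has
(for some `δ ∈ (0,ε]`) a unique `C¹` solution; this solution is bounded and satisfies
`r·y(r) → 0` as `r → 0⁺`. -/
theorem riccati_singular_existence_uniqueness
    (ε : ℝ) (hε : 0 < ε) (h : ℝ → ℝ)
    (hc : ContinuousOn h (Set.Ioc 0 ε))
    (hb : ∃ M : ℝ, ∀ r ∈ Set.Ioc (0 : ℝ) ε, |h r| ≤ M)
    (c : ℝ) :
    ∃ δ : ℝ, 0 < δ ∧ δ ≤ ε ∧ ∃ y : ℝ → ℝ,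
      (∀ r ∈ Set.Ioc (0 : ℝ) δ,
        HasDerivWithinAt y ((y r) ^ 2 + (1 / 2) * h r) (Set.Ioc 0 δ) r) ∧
      Tendsto y (𝓝[>] (0 : ℝ)) (𝓝 c) ∧
      (∃ M : ℝ, ∀ r ∈ Set.Ioc (0 : ℝ) δ, |y r| ≤ M) ∧
      Tendsto (fun r : ℝ => r * y r) (𝓝[>] (0 : ℝ)) (𝓝 0) ∧
      ∀ y' : ℝ → ℝ,
        (∀ r ∈ Set.Ioc (0 : ℝ) δ,
          HasDerivWithinAt y' ((y' r) ^ 2 + (1 / 2) * h r) (Set.Ioc 0 δ) r) →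
        Tendsto y' (𝓝[>] (0 : ℝ)) (𝓝 c) →
        Set.EqOn y' y (Set.Ioc 0 δ) := by
  classical
  obtain ⟨M, hM⟩ := hb
  have hM0 : 0 ≤ M := (abs_nonneg _).trans (hM ε ⟨hε, le_rfl⟩)
  set g : ℝ → ℝ := fun t => (1 / 2) * h t with hgdef
  have hgc : ContinuousOn g (Set.Ioc 0 ε) := continuousOn_const.mul hc
  have hgb : ∀ t ∈ Set.Ioc (0 : ℝ) ε, |g t| ≤ M / 2 := by
    intro t ht
    have := hM t ht
    simp only [hgdef, abs_mul]
    rw [abs_of_nonneg (by norm_num : (0:ℝ) ≤ 1/2)]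
    linarith
  have hgInt : IntegrableOn g (Set.Ioc 0 ε) := by
    refine ⟨hgc.aestronglyMeasurable measurableSet_Ioc, ?_⟩
    refine HasFiniteIntegral.restrict_of_bounded (C := M / 2)
      (by simp [Real.volume_Ioc]) ?_
    filter_upwards [ae_restrict_mem measurableSet_Ioc] with t ht
    simpa [Real.norm_eq_abs] using hgb t ht
  have hII : ∀ a b : ℝ, a ∈ Set.Icc 0 ε → b ∈ Set.Icc 0 ε →
      IntervalIntegrable g MeasureTheory.volume a b := by
    intro a b ha hb'
    rw [intervalIntegrable_iff]
    refine hgInt.mono_set ?_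
    intro x hx
    exact ⟨lt_of_le_of_lt (le_min ha.1 hb'.1) hx.1,
      hx.2.trans (max_le ha.2 hb'.2)⟩
  set H : ℝ → ℝ := fun r => ∫ t in (0:ℝ)..r, g t with hHdef
  have H0 : H 0 = 0 := by simp [hHdef]
  have Hsub : ∀ r ∈ Set.Icc (0:ℝ) ε, ∀ s ∈ Set.Icc (0:ℝ) ε,
      |H r - H s| ≤ (M / 2) * |r - s| := by
    intro r hr s hs
    have : H r - H s = ∫ t in s..r, g t :=
      intervalIntegral.integral_interval_sub_left
        (hII 0 r ⟨le_rfl, hε.le⟩ hr) (hII 0 s ⟨le_rfl, hε.le⟩ hs)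
    rw [this, ← Real.norm_eq_abs]
    refine intervalIntegral.norm_integral_le_of_norm_le_const ?_
    intro x hx
    rw [Real.norm_eq_abs]
    refine hgb x ⟨lt_of_le_of_lt (le_min hs.1 hr.1) hx.1,
      hx.2.trans (max_le hs.2 hr.2)⟩
  have Hbnd : ∀ r ∈ Set.Icc (0:ℝ) ε, |H r| ≤ (M / 2) * ε := by
    intro r hr
    have := Hsub r hr 0 ⟨le_rfl, hε.le⟩
    rw [H0, sub_zero, sub_zero, abs_of_nonneg hr.1] at this
    refine this.trans ?_
    have := hr.2
    nlinarith
  have Hcont : ContinuousOn H (Set.Icc 0 ε) := by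
    refine (LipschitzOnWith.of_dist_le_mul (K := (M/2).toNNReal)
      (f := H) (s := Set.Icc 0 ε) ?_).continuousOn
    intro a ha b hb'
    rw [Real.dist_eq, Real.dist_eq, Real.coe_toNNReal _ (by linarith)]
    exact Hsub a ha b hb'
  -- the constant B and the interval length δ
  set B : ℝ := |c| + 1 + (M / 2) * ε with hBdef
  have hB1 : (1:ℝ) ≤ B := by
    have h1 := abs_nonneg c
    have h2 : 0 ≤ M / 2 * ε := mul_nonneg (by linarith) hε.le
    rw [hBdef]; linarith
  have hB0 : (0:ℝ) < B := lt_of_lt_of_le one_pos hB1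
  set δ : ℝ := min ε (1 / (B ^ 2 + 1)) with hδdef
  have hδpos : 0 < δ := lt_min hε (by positivity)
  have hδε : δ ≤ ε := min_le_left _ _
  have hδB : δ ≤ 1 / (B ^ 2 + 1) := min_le_right _ _
  -- derivative of H within Ioc 0 δ
  have Hmeas : AEStronglyMeasurable g (MeasureTheory.volume.restrict (Set.Ioc 0 ε)) :=
    hgc.aestronglyMeasurable measurableSet_Ioc
  have Hderiv : ∀ r ∈ Set.Ioc (0:ℝ) δ, HasDerivWithinAt H (g r) (Set.Ioc 0 δ) r := by
    intro r hr
    rcases eq_or_lt_of_le hr.2 with hrδ | hrδ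
    · -- r = δ : left derivative
      have hmem : Set.Ioc 0 ε ∈ 𝓝[Set.Iic r] r := by
        refine Filter.mem_of_superset
          (inter_mem_nhdsWithin _ (Ioi_mem_nhds hr.1)) ?_
        rintro x ⟨hx1, hx2⟩
        exact ⟨hx2, hx1.trans ((le_of_eq hrδ).trans hδε)⟩
      have hcw : ContinuousWithinAt g (Set.Iic r) r :=
        (hgc.continuousWithinAt ⟨hr.1, hr.2.trans hδε⟩).mono_of_mem_nhdsWithin hmem
      have := intervalIntegral.integral_hasDerivWithinAt_right
        (f := g) (s := Set.Iic r) (t := Set.Iic r)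
        (hII 0 r ⟨le_rfl, hε.le⟩ ⟨hr.1.le, hr.2.trans hδε⟩)
        ⟨Set.Ioc 0 ε, hmem, Hmeas⟩ hcw
      exact this.mono (fun x hx => hx.2.trans (le_of_eq hrδ.symm))
    · -- r < δ : two-sided derivative
      have hmem : Set.Ioc 0 ε ∈ 𝓝 r :=
        Filter.mem_of_superset (Ioo_mem_nhds hr.1 (lt_of_lt_of_le hrδ hδε))
          Set.Ioo_subset_Ioc_self
      have hca : ContinuousAt g r := hgc.continuousAt hmem
      have := intervalIntegral.integral_hasDerivAt_right
        (f := g) (hII 0 r ⟨le_rfl, hε.le⟩ ⟨hr.1.le, hr.2.trans hδε⟩)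
        ⟨Set.Ioc 0 ε, hmem, Hmeas⟩ hca
      exact this.hasDerivWithinAt
  -- Picard–Lindelöf for u' = (u + H)^2
  have hpl : IsPicardLindelof (tmin := 0) (tmax := δ) (fun t x => (x + H t) ^ 2)
      ⟨0, le_rfl, hδpos.le⟩ c 1 0 (B ^ 2).toNNReal (2 * B).toNNReal := by
    constructor
    · intro t ht
      refine LipschitzOnWith.of_dist_le_mul ?_
      intro a ha b hb'
      rw [Real.dist_eq, Real.dist_eq, Real.coe_toNNReal _ (by positivity)]
      have hHa := Hbnd t ⟨ht.1, ht.2.trans hδε⟩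
      have ha' : |a - c| ≤ 1 := by
        simpa [Real.dist_eq] using Metric.mem_closedBall.1 ha
      have hb'' : |b - c| ≤ 1 := by
        simpa [Real.dist_eq] using Metric.mem_closedBall.1 hb'
      have key : (a + H t) ^ 2 - (b + H t) ^ 2 = (a + b + 2 * H t) * (a - b) := by ring
      rw [key, abs_mul]
      refine mul_le_mul_of_nonneg_right ?_ (abs_nonneg _)
      have h1 : |a| ≤ |c| + 1 := by
        calc |a| = |c + (a - c)| := by ring_nf
        _ ≤ |c| + |a - c| := abs_add_le _ _
        _ ≤ |c| + 1 := by linarith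
      have h2 : |b| ≤ |c| + 1 := by
        calc |b| = |c + (b - c)| := by ring_nf
        _ ≤ |c| + |b - c| := abs_add_le _ _
        _ ≤ |c| + 1 := by linarith
      calc |a + b + 2 * H t| ≤ |a| + |b| + 2 * |H t| := by
            have := abs_add_le (a + b) (2 * H t)
            have := abs_add_le a b
            have : |2 * H t| = 2 * |H t| := by rw [abs_mul]; norm_num
            calc |a + b + 2 * H t| ≤ |a + b| + |2 * H t| := abs_add_le _ _
            _ ≤ |a| + |b| + |2 * H t| := by linarith [abs_add_le a b]
            _ = |a| + |b| + 2 * |H t| := by rw [this]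
        _ ≤ 2 * B := by rw [hBdef]; linarith
    · intro x hx
      exact ((continuousOn_const.add (Hcont.mono (Set.Icc_subset_Icc le_rfl hδε))).pow 2)
    · intro t ht x hx
      have hHt := Hbnd t ⟨ht.1, ht.2.trans hδε⟩
      have hx' : |x - c| ≤ 1 := by
        simpa [Real.dist_eq] using Metric.mem_closedBall.1 hx
      have hxa : |x| ≤ |c| + 1 := by
        calc |x| = |c + (x - c)| := by ring_nf
        _ ≤ |c| + |x - c| := abs_add_le _ _
        _ ≤ |c| + 1 := by linarith
      have hxB : |x + H t| ≤ B := by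
        calc |x + H t| ≤ |x| + |H t| := abs_add_le _ _
        _ ≤ B := by rw [hBdef]; linarith
      rw [Real.norm_eq_abs, abs_pow, Real.coe_toNNReal _ (sq_nonneg B)]
      exact pow_le_pow_left₀ (abs_nonneg _) hxB 2
    · -- C_mul_le_R
      have hmax : max (δ - 0) (0 - 0) = δ := by
        rw [sub_zero, sub_zero]; exact max_eq_left hδpos.le
      show ((B ^ 2).toNNReal : ℝ) * max (δ - 0) (0 - 0) ≤ ((1:NNReal):ℝ) - ((0:NNReal):ℝ)
      rw [Real.coe_toNNReal _ (sq_nonneg B), NNReal.coe_one, NNReal.coe_zero, sub_zero (1:ℝ)]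
      rw [hmax]
      have : B ^ 2 * δ ≤ B ^ 2 * (1 / (B ^ 2 + 1)) :=
        mul_le_mul_of_nonneg_left hδB (by positivity)
      refine this.trans ?_
      rw [mul_one_div, div_le_one (by positivity)]
      linarith
  obtain ⟨f, hf0, hfd⟩ : ∃ f : ℝ → ℝ, f 0 = c ∧ ∀ t ∈ Set.Icc 0 δ,
      HasDerivWithinAt f ((f t + H t) ^ 2) (Set.Icc 0 δ) t :=
    hpl.exists_eq_forall_mem_Icc_hasDerivWithinAt₀
  set y : ℝ → ℝ := fun r => f r + H r with hydef
  -- continuity of y on Icc 0 δ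
  have fcont : ContinuousOn f (Set.Icc 0 δ) := fun r hr => (hfd r hr).continuousWithinAt
  have ycont : ContinuousOn y (Set.Icc 0 δ) :=
    fcont.add (Hcont.mono (Set.Icc_subset_Icc le_rfl hδε))
  have y0 : y 0 = c := by simp [hydef, hf0, H0]
  -- derivative of y
  have yderiv : ∀ r ∈ Set.Ioc (0:ℝ) δ,
      HasDerivWithinAt y ((y r) ^ 2 + (1 / 2) * h r) (Set.Ioc 0 δ) r := by
    intro r hr
    have h1 : HasDerivWithinAt f ((f r + H r) ^ 2) (Set.Ioc 0 δ) r :=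
      (hfd r (Set.Ioc_subset_Icc_self hr)).mono Set.Ioc_subset_Icc_self
    have h2 := Hderiv r hr
    have := h1.add h2
    exact this
  -- limit of y at 0+
  have hle : 𝓝[>] (0:ℝ) ≤ 𝓝[Set.Icc 0 δ] 0 :=
    nhdsWithin_le_of_mem (Filter.mem_of_superset
      (Ioc_mem_nhdsGT hδpos) Set.Ioc_subset_Icc_self)
  have ylim : Tendsto y (𝓝[>] (0:ℝ)) (𝓝 c) := by
    have := (ycont 0 ⟨le_rfl, hδpos.le⟩).tendsto
    rw [y0] at this
    exact this.mono_left hle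
  -- boundedness of y
  obtain ⟨C₀, hC₀⟩ := isCompact_Icc.exists_bound_of_continuousOn ycont
  -- final assembly
  refine ⟨δ, hδpos, hδε, y, yderiv, ylim,
    ⟨C₀, fun r hr => by simpa [Real.norm_eq_abs] using hC₀ r (Set.Ioc_subset_Icc_self hr)⟩,
    ?_, ?_⟩
  · have : Tendsto (fun r : ℝ => r * y r) (𝓝[>] (0:ℝ)) (𝓝 (0 * c)) :=
      Tendsto.mul (tendsto_id.mono_left nhdsWithin_le_nhds) ylim
    simpa using this
  · -- uniqueness
    intro y' hy'd hy'lim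
    -- continuous extension of y'
    set Y' : ℝ → ℝ := fun r => if r = 0 then c else y' r with hY'def
    have hY'eq : ∀ r ∈ Set.Ioc (0:ℝ) δ, Y' r = y' r := by
      intro r hr; simp [hY'def, ne_of_gt hr.1]
    have hy'cw : ∀ r ∈ Set.Ioc (0:ℝ) δ, ContinuousWithinAt y' (Set.Ioc 0 δ) r :=
      fun r hr => (hy'd r hr).continuousWithinAt
    have hY'cont : ContinuousOn Y' (Set.Icc 0 δ) := by
      intro τ hτ
      rcases eq_or_lt_of_le hτ.1 with hτ0 | hτ0
      · subst hτ0
        have hIcc : Set.Icc (0:ℝ) δ = insert 0 (Set.Ioc 0 δ) :=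
          (Set.Ioc_insert_left hδpos.le).symm
        have hY'0 : Y' 0 = c := by simp [hY'def]
        show Tendsto Y' (𝓝[Set.Icc 0 δ] 0) (𝓝 (Y' 0))
        rw [hIcc, nhdsWithin_insert, hY'0]
        refine Tendsto.sup ?_ ?_
        · simpa [hY'0] using (tendsto_pure_nhds Y' 0)
        · have h1 : Tendsto y' (𝓝[Set.Ioc 0 δ] 0) (𝓝 c) :=
            hy'lim.mono_left (nhdsWithin_mono _ Set.Ioc_subset_Ioi_self)
          refine Tendsto.congr' ?_ h1
          filter_upwards [self_mem_nhdsWithin] with x hx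
          exact (hY'eq x hx).symm
      · have h1 : ContinuousWithinAt y' (Set.Icc 0 δ) τ := by
          refine (hy'cw τ ⟨hτ0, hτ.2⟩).mono_of_mem_nhdsWithin ?_
          refine Filter.mem_of_superset
            (inter_mem self_mem_nhdsWithin
              (mem_nhdsWithin_of_mem_nhds (Ioi_mem_nhds hτ0))) ?_
          rintro x ⟨hx1, hx2⟩
          exact ⟨hx2, hx1.2⟩
        refine h1.congr_of_eventuallyEq ?_ (by simp [hY'def, ne_of_gt hτ0])
        filter_upwards [mem_nhdsWithin_of_mem_nhds (Ioi_mem_nhds hτ0)] with x hx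
        simp [hY'def, ne_of_gt (Set.mem_Ioi.1 hx)]
    obtain ⟨C₁, hC₁⟩ := isCompact_Icc.exists_bound_of_continuousOn hY'cont
    set B2 : ℝ := max (max C₀ C₁) 0 with hB2def
    have hB2nonneg : 0 ≤ B2 := le_max_right _ _
    have hyB2 : ∀ r ∈ Set.Icc (0:ℝ) δ, |y r| ≤ B2 := fun r hr =>
      (by simpa [Real.norm_eq_abs] using hC₀ r hr : |y r| ≤ C₀).trans
        ((le_max_left _ _).trans (le_max_left _ _))
    have hy'B2 : ∀ r ∈ Set.Ioc (0:ℝ) δ, |y' r| ≤ B2 := by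
      intro r hr
      have := hC₁ r (Set.Ioc_subset_Icc_self hr)
      rw [Real.norm_eq_abs, hY'eq r hr] at this
      exact this.trans ((le_max_right _ _).trans (le_max_left _ _))
    set K : NNReal := (2 * B2).toNNReal with hKdef
    -- Gronwall estimate on [s, t]
    intro t ht
    have key : ∀ s ∈ Set.Ioc (0:ℝ) t,
        dist (y' t) (y t) ≤ dist (y' s) (y s) * Real.exp (K * (t - s)) := by
      intro s hs
      have hsub : Set.Icc s t ⊆ Set.Ioc 0 δ := fun x hx =>
        ⟨lt_of_lt_of_le hs.1 hx.1, hx.2.trans ht.2⟩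
      have hlip : ∀ τ : ℝ, LipschitzOnWith K
          (fun x : ℝ => x ^ 2 + (1/2) * h τ) (Metric.closedBall 0 B2) := by
        intro τ
        refine LipschitzOnWith.of_dist_le_mul ?_
        intro a ha b hb'
        rw [Real.dist_eq, Real.dist_eq, Real.coe_toNNReal _ (by positivity)]
        have ha' : |a| ≤ B2 := by
          simpa [Real.dist_eq] using Metric.mem_closedBall.1 ha
        have hb'' : |b| ≤ B2 := by
          simpa [Real.dist_eq] using Metric.mem_closedBall.1 hb'
        have : a ^ 2 + (1/2) * h τ - (b ^ 2 + (1/2) * h τ) = (a + b) * (a - b) := by ring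
        rw [this, abs_mul]
        refine mul_le_mul_of_nonneg_right ?_ (abs_nonneg _)
        calc |a + b| ≤ |a| + |b| := abs_add_le _ _
        _ ≤ 2 * B2 := by linarith
      have hderiv_mem : ∀ τ ∈ Set.Ico s t, Set.Ioc (0:ℝ) δ ∈ 𝓝[Set.Ici τ] τ := by
        intro τ hτ
        refine mem_nhdsWithin_of_mem_nhds (Filter.mem_of_superset
          (Ioo_mem_nhds (lt_of_lt_of_le hs.1 hτ.1)
            (lt_of_lt_of_le hτ.2 ht.2)) Set.Ioo_subset_Ioc_self)
      have hIcoIoc : ∀ τ ∈ Set.Ico s t, τ ∈ Set.Ioc (0:ℝ) δ := fun τ hτ =>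
        ⟨lt_of_lt_of_le hs.1 hτ.1, hτ.2.le.trans ht.2⟩
      have hcy' : ContinuousOn y' (Set.Icc s t) := fun τ hτ =>
        (hy'cw τ (hsub hτ)).mono hsub
      have hcy : ContinuousOn y (Set.Icc s t) :=
        (ycont.mono (hsub.trans Set.Ioc_subset_Icc_self))
      have := dist_le_of_trajectories_ODE_of_mem
        (v := fun τ x => x ^ 2 + (1/2) * h τ)
        (s := fun _ => Metric.closedBall (0:ℝ) B2)
        (K := K) (f := y') (g := y)
        (fun τ _ => hlip τ)
        hcy'
        (fun τ hτ => (hy'd τ (hIcoIoc τ hτ)).mono_of_mem_nhdsWithin (hderiv_mem τ hτ))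
        (fun τ hτ => by
          simpa [Real.dist_eq] using hy'B2 τ (hIcoIoc τ hτ))
        hcy
        (fun τ hτ => (yderiv τ (hIcoIoc τ hτ)).mono_of_mem_nhdsWithin (hderiv_mem τ hτ))
        (fun τ hτ => by
          simpa [Real.dist_eq] using
            hyB2 τ (Set.Ioc_subset_Icc_self (hIcoIoc τ hτ)))
        le_rfl t ⟨hs.2, le_rfl⟩
      exact this
    -- take the limit s → 0+
    have hdistlim : Tendsto (fun s => dist (y' s) (y s) * Real.exp (K * (t - s)))
        (𝓝[>] (0:ℝ)) (𝓝 (0 * Real.exp (K * (t - 0)))) := by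
      refine Tendsto.mul ?_ ?_
      · have := hy'lim.dist ylim
        simpa using this
      · refine Real.continuous_exp.continuousAt.tendsto.comp ?_
        refine Tendsto.const_mul _ ?_
        exact (tendsto_const_nhds.sub (tendsto_id.mono_left nhdsWithin_le_nhds))
    have hev : ∀ᶠ s in 𝓝[>] (0:ℝ),
        dist (y' t) (y t) ≤ dist (y' s) (y s) * Real.exp (K * (t - s)) := by
      filter_upwards [Ioc_mem_nhdsGT ht.1] with s hs
      exact key s hs
    have : dist (y' t) (y t) ≤ 0 * Real.exp (K * (t - 0)) :=
      ge_of_tendsto hdistlim hev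
    rw [zero_mul] at this
    exact dist_le_zero.1 this
end
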